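/- (Sharpness of the order Υ^{1/2} in the H¹-estimate of Lemma 2: the shifted-disc example of Remark 4, claim ‖∇(u−u_r)‖_Ω = √8·Υ^{1/2} + O(Υ).) There exists a constant C > 0 such that for all Υ ∈ (0,1): | ∫_{Ω∩Ω_r} ‖∇u(x) − ∇u_r(x)‖² dx + ∫_{Ω∖Ω_r} ‖∇u(x)‖² dx − 8Υ | ≤ C·Υ². (The left-hand sum equals ∫_Ω ‖∇(u−u_r)‖² dx, since u_r vanishes on Ω∖Ω_r.) -/

import Mathlib

set_option maxHeartbeats 1000000

open MeasureTheory Set Real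

/-- A point of the Euclidean plane given by its two coordinates. -/
noncomputable def pt2 (a b : ℝ) : EuclideanSpace ℝ (Fin 2) :=
  (WithLp.equiv 2 (Fin 2 → ℝ)).symm ![a, b]

/-- Centre `(Υ, 0)` of the shifted disc. -/
noncomputable def ctr (Υ : ℝ) : EuclideanSpace ℝ (Fin 2) := pt2 Υ 0

/-- The solution `u(x) = 1 − ‖x‖²` on the unit disc, extended by zero. -/
noncomputable def uSol (x : EuclideanSpace ℝ (Fin 2)) : ℝ :=
  if ‖x‖ < 1 then 1 - ‖x‖^2 else 0

/-- The solution `u_r(x) = 1 − ‖x − (Υ,0)‖²` on the shifted disc, extended by zero. -/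
noncomputable def urSol (Υ : ℝ) (x : EuclideanSpace ℝ (Fin 2)) : ℝ :=
  if ‖x - ctr Υ‖ < 1 then 1 - ‖x - ctr Υ‖^2 else 0

lemma gradAux (c x : EuclideanSpace ℝ (Fin 2)) :
    HasGradientAt (fun y => 1 - ‖y - c‖^2) ((-2:ℝ) • (x - c)) x := by
  have h1 : HasFDerivAt (fun y : EuclideanSpace ℝ (Fin 2) => y - c)
      (ContinuousLinearMap.id ℝ _) x := (hasFDerivAt_id x).sub_const c
  have h3 := (hasFDerivAt_const (1:ℝ) x).sub h1.norm_sq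
  rw [hasGradientAt_iff_hasFDerivAt]
  refine h3.congr_fderiv ?_
  ext y
  simp [real_inner_smul_left, inner_sub_left]

lemma grad_uSol {x : EuclideanSpace ℝ (Fin 2)} (hx : ‖x‖ < 1) :
    gradient uSol x = (-2:ℝ) • x := by
  have hev : uSol =ᶠ[nhds x] (fun y => 1 - ‖y - 0‖^2) := by
    filter_upwards [Metric.isOpen_ball.mem_nhds (by simpa [mem_ball_zero_iff] using hx :
      x ∈ Metric.ball (0 : EuclideanSpace ℝ (Fin 2)) 1)] with y hy
    simp [uSol, mem_ball_zero_iff.mp hy]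
  rw [hev.gradient_eq]
  simpa using (gradAux 0 x).gradient

lemma grad_urSol {Υ : ℝ} {x : EuclideanSpace ℝ (Fin 2)} (hx : ‖x - ctr Υ‖ < 1) :
    gradient (urSol Υ) x = (-2:ℝ) • (x - ctr Υ) := by
  have hev : urSol Υ =ᶠ[nhds x] (fun y => 1 - ‖y - ctr Υ‖^2) := by
    filter_upwards [Metric.isOpen_ball.mem_nhds (by simpa [dist_eq_norm] using hx :
      x ∈ Metric.ball (ctr Υ) 1)] with y hy
    simp [urSol, mem_ball_iff_norm.mp hy]
  rw [hev.gradient_eq]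
  exact (gradAux (ctr Υ) x).gradient


noncomputable def ψ : (ℝ × ℝ) ≃ᵐ EuclideanSpace ℝ (Fin 2) :=
  (MeasurableEquiv.finTwoArrow).symm.trans
    (MeasurableEquiv.toLp 2 (Fin 2 → ℝ))

lemma ψ_mp : MeasurePreserving ψ volume volume :=
  ((EuclideanSpace.volume_preserving_symm_measurableEquiv_toLp (Fin 2)).symm
    (MeasurableEquiv.toLp 2 (Fin 2 → ℝ)).symm).comp
    ((volume_preserving_finTwoArrow ℝ).symm MeasurableEquiv.finTwoArrow)

lemma ψ_apply (p : ℝ × ℝ) : ψ p = pt2 p.1 p.2 := by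
  ext i
  fin_cases i <;>
    simp [ψ, pt2, MeasurableEquiv.coe_toLp, MeasurableEquiv.finTwoArrow]

lemma pt2_norm_sq (a b : ℝ) : ‖pt2 a b‖^2 = a^2 + b^2 := by
  rw [EuclideanSpace.norm_eq, Real.sq_sqrt (by positivity)]
  simp [pt2, Fin.sum_univ_two, sq_abs]

lemma pt2_sub (a b c d : ℝ) : pt2 a b - pt2 c d = pt2 (a-c) (b-d) := by
  ext i; fin_cases i <;> simp [pt2]

lemma norm_lt_one_iff {x : EuclideanSpace ℝ (Fin 2)} : ‖x‖ < 1 ↔ ‖x‖^2 < 1 := by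
  constructor
  · intro h; nlinarith [norm_nonneg x]
  · intro h; nlinarith [norm_nonneg x]

lemma ψ_preimage_ball (Υ : ℝ) :
    ψ ⁻¹' (Metric.ball (0 : EuclideanSpace ℝ (Fin 2)) 1) = {p : ℝ × ℝ | p.1^2 + p.2^2 < 1} ∧
    ψ ⁻¹' (Metric.ball (ctr Υ) 1) = {p : ℝ × ℝ | (p.1 - Υ)^2 + p.2^2 < 1} := by
  constructor <;> ext p <;>
    simp only [mem_preimage, Metric.mem_ball, dist_eq_norm, sub_zero, ψ_apply, mem_setOf_eq, ctr,
      pt2_sub] <;>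
    rw [norm_lt_one_iff, pt2_norm_sq]

noncomputable def DD (Υ : ℝ) : Set (ℝ × ℝ) :=
  {p | p.1^2 + p.2^2 < 1 ∧ ¬ ((p.1 - Υ)^2 + p.2^2 < 1)}

noncomputable def hfun (Υ y : ℝ) : ℝ :=
  if y^2 < 1 then
    4/3*((min (√(1-y^2)) (Υ-√(1-y^2)))^3 + (√(1-y^2))^3)
      + 4*y^2*(min (√(1-y^2)) (Υ-√(1-y^2)) + √(1-y^2))
  else 0

lemma interval_poly (y a b : ℝ) :
    ∫ x in a..b, 4*(x^2+y^2) = 4/3*(b^3-a^3) + 4*y^2*(b-a) := by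
  have hd : ∀ x ∈ uIcc a b, HasDerivAt (fun x => 4/3*x^3 + 4*y^2*x) (4*(x^2+y^2)) x := by
    intro x _
    have h1 := (hasDerivAt_pow 3 x).const_mul (4/3 : ℝ)
    have h2 := (hasDerivAt_id x).const_mul (4*y^2)
    refine (h1.add h2).congr_deriv ?_
    push_cast; ring
  rw [intervalIntegral.integral_eq_sub_of_hasDerivAt hd
    (Continuous.intervalIntegrable (by continuity) a b)]
  ring

lemma inner_slice {Υ : ℝ} (h0 : 0 < Υ) (y : ℝ) :
    ∫ x : ℝ, (DD Υ).indicator (fun p => 4*(p.1^2+p.2^2)) (x, y) = hfun Υ y := by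
  by_cases hy : y^2 < 1
  · set s := √(1-y^2) with hs_def
    have hs2 : s^2 = 1 - y^2 := sq_sqrt (by linarith)
    have hs0 : 0 < s := Real.sqrt_pos.2 (by linarith)
    have hset : ∀ x : ℝ, (x, y) ∈ DD Υ ↔ x ∈ Ioo (-s) s ∩ Iic (Υ - s) := by
      intro x
      constructor
      · rintro ⟨ha, hb⟩
        have ha' : x^2 + y^2 < 1 := ha
        have hb' : ¬((x - Υ)^2 + y^2 < 1) := hb
        simp only [mem_inter_iff, mem_Ioo, mem_Iic]
        have hx1 : x < s := by nlinarith
        have hx2 : -s < x := by nlinarith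
        refine ⟨⟨hx2, hx1⟩, ?_⟩
        by_contra hcon
        push_neg at hcon
        exact hb' (by nlinarith)
      · rintro ⟨⟨hx2, hx1⟩, hx3⟩
        have hx3' : x ≤ Υ - s := hx3
        constructor
        · show x^2 + y^2 < 1; nlinarith
        · show ¬((x - Υ)^2 + y^2 < 1); intro hcon; nlinarith
    have hind : (fun x : ℝ => (DD Υ).indicator (fun p => 4*(p.1^2+p.2^2)) (x, y))
        = (Ioo (-s) s ∩ Iic (Υ - s)).indicator (fun x => 4*(x^2+y^2)) := by
      funext x
      by_cases hx : (x, y) ∈ DD Υ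
      · rw [Set.indicator_of_mem hx, Set.indicator_of_mem ((hset x).mp hx)]
      · rw [Set.indicator_of_notMem hx,
          Set.indicator_of_notMem (fun h => hx ((hset x).mpr h))]
    rw [hind, integral_indicator (measurableSet_Ioo.inter measurableSet_Iic)]
    by_cases hc : Υ - s < s
    · have hseq : Ioo (-s) s ∩ Iic (Υ - s) = Ioc (-s) (Υ - s) := by
        ext x
        simp only [mem_inter_iff, mem_Ioo, mem_Iic, mem_Ioc]
        constructor
        · rintro ⟨⟨h1, h2⟩, h3⟩; exact ⟨h1, h3⟩
        · rintro ⟨h1, h3⟩; exact ⟨⟨h1, by linarith⟩, h3⟩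
      rw [hseq, ← intervalIntegral.integral_of_le (by linarith), interval_poly,
        hfun, if_pos hy, min_eq_right hc.le]
      ring
    · push_neg at hc
      have hseq : Ioo (-s) s ∩ Iic (Υ - s) = Ioo (-s) s := by
        ext x
        simp only [mem_inter_iff, mem_Ioo, mem_Iic]
        exact ⟨fun h => h.1, fun h => ⟨h, by linarith [h.2]⟩⟩
      rw [hseq, ← integral_Ioc_eq_integral_Ioo,
        ← intervalIntegral.integral_of_le (by linarith), interval_poly,
        hfun, if_pos hy, min_eq_left hc]
      ring
  · have : ∀ x : ℝ, (DD Υ).indicator (fun p => 4*(p.1^2+p.2^2)) (x, y) = 0 := by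
      intro x
      apply indicator_of_notMem
      intro hmem
      exact hy (by nlinarith [hmem.1])
    simp only [this, integral_zero, hfun, if_neg hy]


lemma DD_meas (Υ : ℝ) : MeasurableSet (DD Υ) := by
  have h1 : Measurable fun p : ℝ × ℝ => p.1^2 + p.2^2 := by fun_prop
  have h2 : Measurable fun p : ℝ × ℝ => (p.1 - Υ)^2 + p.2^2 := by fun_prop
  exact (measurableSet_lt h1 measurable_const).inter
    (measurableSet_lt h2 measurable_const).compl

lemma DD_subset (Υ : ℝ) : DD Υ ⊆ Ioo (-1 : ℝ) 1 ×ˢ Ioo (-1 : ℝ) 1 := by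
  rintro ⟨x, y⟩ ⟨h1, -⟩
  have h1' : x^2 + y^2 < 1 := h1
  constructor <;> constructor <;> simp only [] <;> nlinarith

lemma DD_vol_lt (Υ : ℝ) : volume (DD Υ) < ⊤ := by
  refine (measure_mono (DD_subset Υ)).trans_lt ?_
  rw [Measure.volume_eq_prod, Measure.prod_prod, Real.volume_Ioo]
  finiteness

lemma hfun_meas (Υ : ℝ) : Measurable (hfun Υ) := by
  apply Measurable.ite
  · exact measurableSet_lt (by fun_prop) measurable_const
  · fun_prop
  · fun_prop

lemma hfun_bound {Υ y : ℝ} (h0 : 0 < Υ) (h1 : Υ < 1) (hy : y ∈ Ioo (-1:ℝ) 1) :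
    |hfun Υ y| ≤ 11 := by
  obtain ⟨hyl, hyr⟩ := hy
  have hy2 : y^2 < 1 := by nlinarith
  set s := √(1-y^2) with hs_def
  have hs2 : s^2 = 1 - y^2 := sq_sqrt (by linarith)
  have hs0 : 0 ≤ s := Real.sqrt_nonneg _
  have hs1 : s ≤ 1 := by nlinarith
  set t := min s (Υ - s) with ht_def
  have ht1 : t ≤ s := min_le_left _ _
  have ht2 : -s ≤ t := le_min (by linarith) (by linarith)
  rw [hfun, if_pos hy2, ← hs_def, ← ht_def]
  rw [abs_le]
  constructor <;> nlinarith [sq_nonneg t, sq_nonneg (t*s), sq_nonneg (t+s), sq_nonneg (t-s)]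

lemma lune_integral {Υ : ℝ} (h0 : 0 < Υ) (h1 : Υ < 1) :
    |(∫ p in DD Υ, 4*(p.1^2+p.2^2)) - 8*Υ| ≤ 30 * Υ^2 := by
  have hDDm := DD_meas Υ
  -- integrability on DD
  have hInt : IntegrableOn (fun p : ℝ × ℝ => 4*(p.1^2+p.2^2)) (DD Υ) := by
    apply Measure.integrableOn_of_bounded (M := 8) (DD_vol_lt Υ).ne
    · exact (Continuous.aestronglyMeasurable (by continuity))
    · refine (ae_restrict_iff' hDDm).2 (ae_of_all _ fun p hp => ?_)
      have := hp.1
      rw [Real.norm_eq_abs, abs_le]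
      constructor <;> nlinarith [sq_nonneg p.1, sq_nonneg p.2]
  -- Fubini
  have step1 : (∫ p in DD Υ, 4*(p.1^2+p.2^2)) = ∫ y : ℝ, hfun Υ y := by
    rw [← integral_indicator hDDm]
    have hIndInt : Integrable ((DD Υ).indicator fun p : ℝ × ℝ => 4*(p.1^2+p.2^2)) volume :=
      (integrable_indicator_iff hDDm).2 hInt
    rw [Measure.volume_eq_prod] at hIndInt ⊢
    rw [integral_prod_symm _ hIndInt]
    exact integral_congr_ae (Filter.Eventually.of_forall fun y => inner_slice h0 y)
  rw [step1]
  -- restrict to Ioo (-1) 1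
  have hzero : ∀ y : ℝ, y ∉ Ioo (-1:ℝ) 1 → hfun Υ y = 0 := by
    intro y hy
    rw [hfun, if_neg]
    simp only [mem_Ioo, not_and_or, not_lt] at hy
    rcases hy with h | h <;> nlinarith
  rw [← setIntegral_eq_integral_of_forall_compl_eq_zero hzero]
  -- integrability of hfun on Ioo
  have hIoo_vol : volume (Ioo (-1:ℝ) 1) = ENNReal.ofReal 2 := by
    rw [Real.volume_Ioo]; norm_num
  have hIntH : IntegrableOn (hfun Υ) (Ioo (-1:ℝ) 1) := by
    apply Measure.integrableOn_of_bounded (M := 11)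
    · rw [hIoo_vol]; finiteness
    · exact (hfun_meas Υ).aestronglyMeasurable
    · refine (ae_restrict_iff' measurableSet_Ioo).2 (ae_of_all _ fun y hy => ?_)
      rw [Real.norm_eq_abs]; exact hfun_bound h0 h1 hy
  -- subtract the constant
  have hconst : ∫ _ in Ioo (-1:ℝ) 1, (4*Υ) = 8*Υ := by
    rw [setIntegral_const, measureReal_def, hIoo_vol, ENNReal.toReal_ofReal (by norm_num), smul_eq_mul]
    ring
  have hsub : (∫ y in Ioo (-1:ℝ) 1, hfun Υ y) - 8*Υ
      = ∫ y in Ioo (-1:ℝ) 1, (hfun Υ y - 4*Υ) := by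
    rw [integral_sub hIntH (integrableOn_const (by rw [hIoo_vol]; finiteness))]
    rw [hconst]
  rw [hsub]
  -- split good/bad regions
  set y0 := √(1 - Υ^2/4) with hy0_def
  have hy0sq : y0^2 = 1 - Υ^2/4 := sq_sqrt (by nlinarith)
  have hy00 : 0 ≤ y0 := Real.sqrt_nonneg _
  have hy01 : y0 ≤ 1 := by nlinarith
  have hsubset : Ioo (-y0) y0 ⊆ Ioo (-1:ℝ) 1 := Ioo_subset_Ioo (by linarith) hy01
  have hIntH' : IntegrableOn (fun y => hfun Υ y - 4*Υ) (Ioo (-1:ℝ) 1) :=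
    hIntH.sub (integrableOn_const (by rw [hIoo_vol]; finiteness))
  have hdiff := integral_diff (measurableSet_Ioo (a := -y0) (b := y0)) hIntH' hsubset
  have hsplit : ∫ y in Ioo (-1:ℝ) 1, (hfun Υ y - 4*Υ)
      = (∫ y in Ioo (-y0) y0, (hfun Υ y - 4*Υ))
        + ∫ y in Ioo (-1:ℝ) 1 \ Ioo (-y0) y0, (hfun Υ y - 4*Υ) := by
    rw [hdiff]; ring
  rw [hsplit]
  -- good region bound
  have hgood : |∫ y in Ioo (-y0) y0, (hfun Υ y - 4*Υ)| ≤ 16/3*Υ^2 * 2 := by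
    have hvol : volume (Ioo (-y0) y0) < ⊤ := by rw [Real.volume_Ioo]; finiteness
    have hb : ∀ y ∈ Ioo (-y0) y0, ‖hfun Υ y - 4*Υ‖ ≤ 16/3*Υ^2 := by
      intro y hy
      obtain ⟨hyl, hyr⟩ := hy
      have hyy : y^2 < y0^2 := by nlinarith
      have hy2 : y^2 < 1 := by nlinarith
      set s := √(1-y^2) with hs_def
      have hs2 : s^2 = 1 - y^2 := sq_sqrt (by linarith)
      have hs0 : 0 ≤ s := Real.sqrt_nonneg _
      have hs1 : s ≤ 1 := by nlinarith
      have hshalf : Υ/2 < s := by nlinarith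
      have hmin : min s (Υ - s) = Υ - s := min_eq_right (by linarith)
      have hval : hfun Υ y - 4*Υ = 4/3*Υ^3 - 4*Υ^2*s := by
        rw [hfun, if_pos hy2, ← hs_def, hmin]
        linear_combination 4*Υ*hs2
      rw [hval, Real.norm_eq_abs, abs_le]
      have h4 : 4*Υ^2*s ≤ 4*Υ^2 := by nlinarith
      have h5 : 0 ≤ 4*Υ^2*s := by positivity
      have h6 : Υ^3 ≤ Υ^2 := by nlinarith
      constructor <;> nlinarith
    have h2 := norm_setIntegral_le_of_norm_le_const hvol hb
    rw [measureReal_def] at h2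
    have h3 : (volume (Ioo (-y0) y0)).toReal = 2*y0 := by
      rw [Real.volume_Ioo, ENNReal.toReal_ofReal (by linarith)]; ring
    rw [← Real.norm_eq_abs]
    refine h2.trans ?_
    rw [h3]
    nlinarith
  -- bad region bound
  have hbadvol : (volume (Ioo (-1:ℝ) 1 \ Ioo (-y0) y0)).toReal ≤ Υ^2/2 := by
    rw [measure_diff hsubset measurableSet_Ioo.nullMeasurableSet
      (by rw [Real.volume_Ioo]; finiteness)]
    rw [hIoo_vol, Real.volume_Ioo, ← ENNReal.ofReal_sub _ (by linarith),
      ENNReal.toReal_ofReal (by linarith)]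
    nlinarith
  have hbad : |∫ y in Ioo (-1:ℝ) 1 \ Ioo (-y0) y0, (hfun Υ y - 4*Υ)| ≤ 10*Υ * (Υ^2/2) := by
    have hvol : volume (Ioo (-1:ℝ) 1 \ Ioo (-y0) y0) < ⊤ :=
      (measure_mono diff_subset).trans_lt (by rw [hIoo_vol]; finiteness)
    have hb : ∀ y ∈ Ioo (-1:ℝ) 1 \ Ioo (-y0) y0, ‖hfun Υ y - 4*Υ‖ ≤ 10*Υ := by
      rintro y ⟨⟨hyl, hyr⟩, hny⟩
      simp only [mem_Ioo, not_and_or, not_lt] at hny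
      have hyy : y0^2 ≤ y^2 := by rcases hny with h | h <;> nlinarith
      have hy2 : y^2 < 1 := by nlinarith
      set s := √(1-y^2) with hs_def
      have hs2 : s^2 = 1 - y^2 := sq_sqrt (by linarith)
      have hs0 : 0 ≤ s := Real.sqrt_nonneg _
      have hshalf : s ≤ Υ/2 := by nlinarith
      have hmin : min s (Υ - s) = s := min_eq_left (by linarith)
      have hval : hfun Υ y = 8/3*s^3 + 8*y^2*s := by
        rw [hfun, if_pos hy2, ← hs_def, hmin]; ring
      rw [Real.norm_eq_abs, abs_le, hval]
      have hy1 : y^2 ≤ 1 := hy2.le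
      have hs1 : s ≤ 1 := by linarith
      have hcube : s^3 ≤ s := by nlinarith
      have hys : y^2*s ≤ s := by nlinarith
      have hnn3 : 0 ≤ s^3 := by positivity
      have hnnys : 0 ≤ y^2*s := by positivity
      constructor <;> nlinarith
    have h2 := norm_setIntegral_le_of_norm_le_const hvol hb
    rw [measureReal_def] at h2
    rw [← Real.norm_eq_abs]
    refine h2.trans ?_
    have h10 : (0:ℝ) ≤ 10*Υ := by positivity
    nlinarith [hbadvol, ENNReal.toReal_nonneg
      (a := volume (Ioo (-1:ℝ) 1 \ Ioo (-y0) y0))]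
  calc |(∫ y in Ioo (-y0) y0, (hfun Υ y - 4*Υ))
        + ∫ y in Ioo (-1:ℝ) 1 \ Ioo (-y0) y0, (hfun Υ y - 4*Υ)|
      ≤ |∫ y in Ioo (-y0) y0, (hfun Υ y - 4*Υ)|
        + |∫ y in Ioo (-1:ℝ) 1 \ Ioo (-y0) y0, (hfun Υ y - 4*Υ)| := abs_add_le _ _
    _ ≤ 16/3*Υ^2 * 2 + 10*Υ * (Υ^2/2) := by gcongr
    _ ≤ 30 * Υ^2 := by nlinarith

/-- Sharpness of the order `Υ^{1/2}` in the H¹-estimate of Lemma 2: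
the shifted-disc example of Remark 4, `‖∇(u−u_r)‖_Ω = √8·Υ^{1/2} + O(Υ)`. -/
theorem shifted_disc_H1_sharpness :
    ∃ C : ℝ, 0 < C ∧ ∀ Υ ∈ Ioo (0:ℝ) 1,
      |(∫ x in Metric.ball (0 : EuclideanSpace ℝ (Fin 2)) 1 ∩ Metric.ball (ctr Υ) 1,
          ‖gradient uSol x - gradient (urSol Υ) x‖^2)
        + (∫ x in Metric.ball (0 : EuclideanSpace ℝ (Fin 2)) 1 \ Metric.ball (ctr Υ) 1,
            ‖gradient uSol x‖^2)
        - 8 * Υ| ≤ C * Υ^2 := by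
  refine ⟨100, by norm_num, ?_⟩
  rintro Υ ⟨h0, h1⟩
  set B : Set (EuclideanSpace ℝ (Fin 2)) := Metric.ball 0 1 with hB_def
  set B' : Set (EuclideanSpace ℝ (Fin 2)) := Metric.ball (ctr Υ) 1 with hB'_def
  have hctr_norm : ‖ctr Υ‖^2 = Υ^2 := by
    rw [ctr, pt2_norm_sq]; ring
  -- first integral
  have e1 : (∫ x in B ∩ B', ‖gradient uSol x - gradient (urSol Υ) x‖^2)
      = (volume (B ∩ B')).toReal * (4*Υ^2) := by
    rw [setIntegral_congr_fun (measurableSet_ball.inter measurableSet_ball)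
      (g := fun _ => 4*Υ^2) ?_]
    · rw [setIntegral_const, measureReal_def, smul_eq_mul]
    · rintro x ⟨hx1, hx2⟩
      show ‖gradient uSol x - gradient (urSol Υ) x‖^2 = 4*Υ^2
      rw [grad_uSol (mem_ball_zero_iff.mp hx1), grad_urSol (mem_ball_iff_norm.mp hx2)]
      have : (-2:ℝ) • x - (-2:ℝ) • (x - ctr Υ) = (-2:ℝ) • (ctr Υ) := by
        rw [← smul_sub]; congr 1; abel
      rw [this, norm_smul]
      simp only [norm_neg, Real.norm_ofNat, mul_pow]
      rw [hctr_norm]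
      norm_num
  -- bound on the volume of B ∩ B'
  have hBvol : volume B ≤ ENNReal.ofReal 4 := by
    rw [← ψ_mp.measure_preimage measurableSet_ball.nullMeasurableSet,
      (ψ_preimage_ball Υ).1]
    refine (measure_mono (?_ : _ ⊆ Ioo (-1:ℝ) 1 ×ˢ Ioo (-1:ℝ) 1)).trans ?_
    · rintro ⟨x, y⟩ hp
      have hp' : x^2 + y^2 < 1 := hp
      constructor <;> constructor <;> simp only [] <;> nlinarith
    · rw [Measure.volume_eq_prod, Measure.prod_prod, Real.volume_Ioo,
        ← ENNReal.ofReal_mul (by norm_num)]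
      norm_num
  have hVle : (volume (B ∩ B')).toReal ≤ 4 := by
    refine ENNReal.toReal_le_of_le_ofReal (by norm_num) ?_
    exact (measure_mono inter_subset_left).trans hBvol
  have hV0 : 0 ≤ (volume (B ∩ B')).toReal := ENNReal.toReal_nonneg
  -- second integral
  have e2 : (∫ x in B \ B', ‖gradient uSol x‖^2) = ∫ p in DD Υ, 4*(p.1^2+p.2^2) := by
    have step1 : (∫ x in B \ B', ‖gradient uSol x‖^2)
        = ∫ x in B \ B', 4*‖x‖^2 := by
      refine setIntegral_congr_fun (measurableSet_ball.diff measurableSet_ball) ?_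
      rintro x ⟨hx1, -⟩
      show ‖gradient uSol x‖^2 = 4*‖x‖^2
      rw [grad_uSol (mem_ball_zero_iff.mp hx1), norm_smul]
      simp only [norm_neg, Real.norm_ofNat, mul_pow]
      ring
    have hpre : ψ ⁻¹' (B \ B') = DD Υ := by
      rw [preimage_diff, (ψ_preimage_ball Υ).1, (ψ_preimage_ball Υ).2]
      ext p
      simp only [DD, mem_diff, mem_setOf_eq]
    have step2 : (∫ x in B \ B', 4*‖x‖^2)
        = ∫ p in ψ ⁻¹' (B \ B'), 4*‖ψ p‖^2 :=
      (ψ_mp.setIntegral_preimage_emb ψ.measurableEmbedding _ _).symm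
    rw [step1, step2, hpre]
    refine setIntegral_congr_fun (DD_meas Υ) fun p _ => ?_
    rw [ψ_apply, pt2_norm_sq]
  rw [e1, e2]
  have hlune := lune_integral h0 h1
  calc |(volume (B ∩ B')).toReal * (4*Υ^2) + (∫ p in DD Υ, 4*(p.1^2+p.2^2)) - 8*Υ|
      ≤ |(volume (B ∩ B')).toReal * (4*Υ^2)|
        + |(∫ p in DD Υ, 4*(p.1^2+p.2^2)) - 8*Υ| := by
        have := abs_add_le ((volume (B ∩ B')).toReal * (4*Υ^2))
          ((∫ p in DD Υ, 4*(p.1^2+p.2^2)) - 8*Υ)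
        rw [add_sub_assoc]
        exact this
    _ ≤ 4 * (4*Υ^2) + 30*Υ^2 := by
        have hfst : |(volume (B ∩ B')).toReal * (4*Υ^2)| ≤ 4*(4*Υ^2) := by
          rw [abs_of_nonneg (by positivity)]
          nlinarith [hVle, hV0]
        exact add_le_add hfst hlune
    _ ≤ 100 * Υ^2 := by nlinarith
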